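/- A minimal monomial sequence f_1,...,f_n is an unconditional d-sequence if and only if there exist monomials d, g_1,...,g_n with f_i = d·g_i, gcd(d, g_i) = 1 for all i, and g_1,...,g_n pairwise coprime. -/

import Mathlib

open MvPolynomial

/-- A sequence `f_0,…,f_{n-1}` (0-based) is a d-sequence if it minimally
generates its ideal (for monomials: no `f_i` divides `f_j` for `i ≠ j`) and
`(f_0,…,f_{i-1}) : (f_i f_k) = (f_0,…,f_{i-1}) : f_k` for all `i ≤ k`. -/
def IsDSequence {R : Type*} [CommRing R] {n : ℕ} (f : Fin n → R) : Prop :=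
  (∀ i j : Fin n, i ≠ j → ¬f i ∣ f j) ∧
    ∀ i k : Fin n, i ≤ k →
      (Ideal.span (f '' {j | j < i})).colon (Ideal.span {f i * f k}) =
        (Ideal.span (f '' {j | j < i})).colon (Ideal.span {f k})


lemma mem_colon_monomial {K : Type*} [Field K] {m : ℕ} (S : Set (Fin m →₀ ℕ))
    (c : Fin m →₀ ℕ) (r : MvPolynomial (Fin m) K) :
    r ∈ (Ideal.span ((fun s => monomial s (1:K)) '' S)).colon (Ideal.span {monomial c (1:K)}) ↔
      ∀ s ∈ r.support, ∃ b ∈ S, b ≤ s + c := by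
  rw [Ideal.mem_colon_span_singleton, mem_ideal_span_monomial_image]
  constructor
  · intro H s hs
    have hmem : s + c ∈ (r * monomial c (1:K)).support := by
      rw [MvPolynomial.mem_support_iff, coeff_mul_monomial, mul_one]
      exact MvPolynomial.mem_support_iff.mp hs
    exact H _ hmem
  · intro H s' hs'
    classical
    have := MvPolynomial.support_mul r (monomial c (1:K)) hs'
    rw [Finset.mem_add] at this
    obtain ⟨s, hs, t, ht, rfl⟩ := this
    have htc : t = c := by
      have := MvPolynomial.support_monomial (s := c) (a := (1:K))
      rw [if_neg one_ne_zero] at this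
      simpa [this] using ht
    subst htc
    obtain ⟨b, hb, hle⟩ := H s hs
    exact ⟨b, hb, hle⟩

lemma colon_eq_iff {K : Type*} [Field K] {m : ℕ} (S : Set (Fin m →₀ ℕ))
    (u v : Fin m →₀ ℕ) :
    ((Ideal.span ((fun s => monomial s (1:K)) '' S)).colon
        (Ideal.span {monomial (u + v) (1:K)}) =
      (Ideal.span ((fun s => monomial s (1:K)) '' S)).colon
        (Ideal.span {monomial v (1:K)})) ↔
      ∀ b ∈ S, ∃ b' ∈ S, b' ≤ (b - (u + v)) + v := by
  classical
  constructor
  · intro H b hb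
    have h1 : (monomial (b - (u+v)) (1:K)) ∈
        (Ideal.span ((fun s => monomial s (1:K)) '' S)).colon
          (Ideal.span {monomial (u + v) (1:K)}) := by
      rw [mem_colon_monomial]
      intro s hs
      rw [MvPolynomial.support_monomial, if_neg one_ne_zero, Finset.mem_singleton] at hs
      subst hs
      exact ⟨b, hb, le_tsub_add⟩
    rw [H, mem_colon_monomial] at h1
    have := h1 (b - (u+v)) (by
      rw [MvPolynomial.support_monomial, if_neg one_ne_zero]; simp)
    exact this
  · intro H
    apply le_antisymm
    · intro r hr
      rw [mem_colon_monomial] at hr ⊢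
      intro s hs
      obtain ⟨b, hb, hle⟩ := hr s hs
      obtain ⟨b', hb', hle'⟩ := H b hb
      refine ⟨b', hb', hle'.trans ?_⟩
      have : b - (u+v) ≤ s := tsub_le_iff_right.mpr hle
      exact add_le_add_left this v
    · intro r hr
      rw [mem_colon_monomial] at hr ⊢
      intro s hs
      obtain ⟨b, hb, hle⟩ := hr s hs
      exact ⟨b, hb, hle.trans (by rw [add_comm u v, ← add_assoc]; exact le_self_add)⟩

lemma exists_perm2 {n : ℕ} (h : 1 < n) (i j : Fin n) (hij : i ≠ j) :
    ∃ σ : Equiv.Perm (Fin n), σ ⟨0, by omega⟩ = i ∧ σ ⟨1, h⟩ = j := by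
  set z0 : Fin n := ⟨0, by omega⟩
  set z1 : Fin n := ⟨1, h⟩
  have hz : z0 ≠ z1 := by simp [z0, z1, Fin.ext_iff]
  set e1 := Equiv.swap z0 i
  set j' := e1 j
  have hj'0 : j' ≠ z0 := by
    intro hh
    apply hij
    have : e1 j' = e1 z0 := by rw [hh]
    simpa [j', Equiv.swap_apply_left, e1, Equiv.swap_apply_self] using this.symm
  set e2 := Equiv.swap z1 j'
  refine ⟨e2.trans e1, ?_, ?_⟩
  · have : e2 z0 = z0 := Equiv.swap_apply_of_ne_of_ne hz (Ne.symm hj'0)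
    simp [Equiv.trans_apply, this, e1, Equiv.swap_apply_left]
  · have : e2 z1 = j' := Equiv.swap_apply_left _ _
    simp only [Equiv.trans_apply, this, j', e1, Equiv.swap_apply_self]

lemma exists_perm3 {n : ℕ} (h : 2 < n) (i j k : Fin n) (hij : i ≠ j) (hik : i ≠ k)
    (hjk : j ≠ k) :
    ∃ σ : Equiv.Perm (Fin n), σ ⟨0, by omega⟩ = i ∧ σ ⟨1, by omega⟩ = j ∧ σ ⟨2, h⟩ = k := by
  obtain ⟨τ, hτ0, hτ1⟩ := exists_perm2 (by omega) i j hij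
  set z0 : Fin n := ⟨0, by omega⟩
  set z1 : Fin n := ⟨1, by omega⟩
  set z2 : Fin n := ⟨2, h⟩
  set k' := τ.symm k
  have hk'0 : k' ≠ z0 := by
    intro hh; apply hik
    rw [← hτ0, ← hh]; simp [k']
  have hk'1 : k' ≠ z1 := by
    intro hh; apply hjk
    rw [← hτ1, ← hh]; simp [k']
  set e3 := Equiv.swap z2 k'
  have h02 : z0 ≠ z2 := by simp [z0, z2, Fin.ext_iff]
  have h12 : z1 ≠ z2 := by simp [z1, z2, Fin.ext_iff]
  refine ⟨e3.trans τ, ?_, ?_, ?_⟩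
  · have : e3 z0 = z0 := Equiv.swap_apply_of_ne_of_ne h02 (Ne.symm hk'0)
    simp [Equiv.trans_apply, this, hτ0]
  · have : e3 z1 = z1 := Equiv.swap_apply_of_ne_of_ne h12 (Ne.symm hk'1)
    simp [Equiv.trans_apply, this, hτ1]
  · have : e3 z2 = k' := Equiv.swap_apply_left _ _
    simp [Equiv.trans_apply, this, k']

lemma ds_colon_iff {K : Type*} [Field K] {m n : ℕ} (a : Fin n → (Fin m →₀ ℕ))
    (f : Fin n → MvPolynomial (Fin m) K) (hf : ∀ i, f i = monomial (a i) 1)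
    (σ : Equiv.Perm (Fin n)) (I K' : Fin n) :
    ((Ideal.span ((f ∘ σ) '' {j | j < I})).colon
        (Ideal.span {(f ∘ σ) I * (f ∘ σ) K'}) =
      (Ideal.span ((f ∘ σ) '' {j | j < I})).colon (Ideal.span {(f ∘ σ) K'})) ↔
      ∀ p, p < I → ∃ q, q < I ∧
        a (σ q) ≤ (a (σ p) - (a (σ I) + a (σ K'))) + a (σ K') := by
  have him : (f ∘ σ) '' {j | j < I} =
      (fun s => monomial s (1:K)) '' ((fun j => a (σ j)) '' {j | j < I}) := by
    rw [← Set.image_comp]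
    exact Set.image_congr' (fun j => hf (σ j))
  have hm1 : (f ∘ σ) I * (f ∘ σ) K' = monomial (a (σ I) + a (σ K')) (1:K) := by
    simp [Function.comp, hf, monomial_mul]
  have hm2 : (f ∘ σ) K' = monomial (a (σ K')) (1:K) := hf _
  rw [him, hm1, hm2, colon_eq_iff]
  constructor
  · intro H p hp
    obtain ⟨b', ⟨q, hq, rfl⟩, hle⟩ := H (a (σ p)) ⟨p, hp, rfl⟩
    exact ⟨q, hq, hle⟩
  · rintro H b ⟨p, hp, rfl⟩
    obtain ⟨q, hq, hle⟩ := H p hp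
    exact ⟨a (σ q), ⟨q, hq, rfl⟩, hle⟩

/-- A minimal monomial sequence `f_1,…,f_n` is an unconditional d-sequence
(every permutation is a d-sequence) iff there exist monomials `d, g_1,…,g_n`
with `f_i = d·g_i`, `gcd(d,g_i) = 1` for all `i`, and `g_1,…,g_n` pairwise
coprime. -/
theorem stmt_10 {K : Type*} [Field K] {m n : ℕ} (a : Fin n → (Fin m →₀ ℕ))
    (f : Fin n → MvPolynomial (Fin m) K) (hf : ∀ i, f i = monomial (a i) 1)
    (hmin : ∀ i j : Fin n, i ≠ j → ¬f i ∣ f j) :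
    (∀ σ : Equiv.Perm (Fin n), IsDSequence (f ∘ σ)) ↔
      ∃ (d : Fin m →₀ ℕ) (g : Fin n → (Fin m →₀ ℕ)),
        (∀ i, f i = monomial d 1 * monomial (g i) 1) ∧ (∀ i, d ⊓ g i = 0) ∧
          ∀ i j : Fin n, i ≠ j → g i ⊓ g j = 0 := by
  constructor
  · intro hD
    rcases Nat.eq_zero_or_pos n with hn | hn
    · subst hn
      exact ⟨0, fun i => i.elim0, fun i => i.elim0, fun i => i.elim0, fun i => i.elim0⟩
    -- P1
    have hP1 : ∀ i j : Fin n, i ≠ j → ∀ x, a i x ≤ a j x ∨ a j x = 0 := by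
      intro i j hij x
      have h2 : 1 < n := by
        have hi := i.is_lt; have hj := j.is_lt
        have : i.val ≠ j.val := fun h => hij (Fin.ext h)
        omega
      obtain ⟨σ, hσ0, hσ1⟩ := exists_perm2 h2 i j hij
      have hc := (hD σ).2 ⟨1, h2⟩ ⟨1, h2⟩ le_rfl
      rw [ds_colon_iff a f hf] at hc
      obtain ⟨q, hq, hle⟩ := hc ⟨0, by omega⟩ (by simp [Fin.lt_def])
      have hq0 : q = ⟨0, by omega⟩ := by
        rw [Fin.lt_def] at hq; exact Fin.ext (by simpa using hq)
      rw [hq0, hσ0, hσ1] at hle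
      have := Finsupp.le_def.mp hle x
      simp only [Finsupp.add_apply, Finsupp.tsub_apply] at this
      omega
    -- P2
    have hP2 : ∀ i j k : Fin n, i ≠ j → i ≠ k → j ≠ k → ∀ x,
        0 < a j x → a i x ≤ a k x := by
      intro i j k hij hik hjk x hx
      have h3 : 2 < n := by
        have hi := i.is_lt; have hj := j.is_lt; have hk := k.is_lt
        have h1 : i.val ≠ j.val := fun h => hij (Fin.ext h)
        have h2 : i.val ≠ k.val := fun h => hik (Fin.ext h)
        have h4 : j.val ≠ k.val := fun h => hjk (Fin.ext h)
        omega
      obtain ⟨σ, hσ0, hσ1, hσ2⟩ := exists_perm3 h3 i j k hij hik hjk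
      have hc := (hD σ).2 ⟨1, by omega⟩ ⟨2, h3⟩ (by simp [Fin.le_def])
      rw [ds_colon_iff a f hf] at hc
      obtain ⟨q, hq, hle⟩ := hc ⟨0, by omega⟩ (by simp [Fin.lt_def])
      have hq0 : q = ⟨0, by omega⟩ := by
        rw [Fin.lt_def] at hq; exact Fin.ext (by simpa using hq)
      rw [hq0, hσ0, hσ1, hσ2] at hle
      have := Finsupp.le_def.mp hle x
      simp only [Finsupp.add_apply, Finsupp.tsub_apply] at this
      omega
    -- construction
    have hne : (Finset.univ : Finset (Fin n)).Nonempty := ⟨⟨0, hn⟩, Finset.mem_univ _⟩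
    set dfun : Fin m → ℕ := fun x => Finset.univ.inf' hne (fun i => a i x) with hdfun
    set d : Fin m →₀ ℕ := Finsupp.equivFunOnFinite.symm dfun with hd
    set g : Fin n → (Fin m →₀ ℕ) :=
      fun i => Finsupp.equivFunOnFinite.symm (fun x => a i x - dfun x) with hg
    have hdapp : ∀ x, d x = dfun x := fun _ => rfl
    have hgapp : ∀ i x, g i x = a i x - dfun x := fun _ _ => rfl
    have hdle : ∀ i x, dfun x ≤ a i x := fun i x => Finset.inf'_le _ (Finset.mem_univ i)
    have hmin' : ∀ x, ∃ k, dfun x = a k x := by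
      intro x
      obtain ⟨k, _, hk⟩ := Finset.exists_mem_eq_inf' hne (fun i => a i x)
      exact ⟨k, hk⟩
    refine ⟨d, g, ?_, ?_, ?_⟩
    · intro i
      have had : d + g i = a i := by
        ext x
        rw [Finsupp.add_apply, hdapp, hgapp]
        have := hdle i x
        omega
      rw [hf, monomial_mul, one_mul, had]
    · intro i
      ext x
      rw [Finsupp.inf_apply, Finsupp.zero_apply, hdapp, hgapp]
      obtain ⟨k, hk⟩ := hmin' x
      by_cases hki : k = i
      · subst hki; omega
      · rcases hP1 i k (fun h => hki h.symm) x with h | h <;> omega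
    · intro i j hij
      ext x
      rw [Finsupp.inf_apply, Finsupp.zero_apply, hgapp, hgapp]
      obtain ⟨k, hk⟩ := hmin' x
      by_contra hcon
      have hgi : dfun x < a i x := by omega
      have hgj : dfun x < a j x := by omega
      have hki : k ≠ i := fun h => by subst h; omega
      have hkj : k ≠ j := fun h => by subst h; omega
      have := hP2 i j k hij (fun h => hki h.symm) (fun h => hkj h.symm) x (by omega)
      omega
  · rintro ⟨d, g, hfg, hdg, hgg⟩ σ
    have ha : ∀ i, a i = d + g i := by
      intro i
      have h1 : monomial (a i) (1:K) = monomial (d + g i) (1:K) := by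
        rw [← hf i, hfg i, monomial_mul, one_mul]
      exact monomial_left_injective one_ne_zero h1
    have hdg' : ∀ i x, d x = 0 ∨ g i x = 0 := by
      intro i x
      have := congrArg (fun h => h x) (hdg i)
      simpa [Finsupp.inf_apply, Nat.min_eq_zero_iff] using this
    have hgg' : ∀ i j, i ≠ j → ∀ x, g i x = 0 ∨ g j x = 0 := by
      intro i j hij x
      have := congrArg (fun h => h x) (hgg i j hij)
      simpa [Finsupp.inf_apply, Nat.min_eq_zero_iff] using this
    constructor
    · intro i j hij
      exact hmin (σ i) (σ j) (fun h => hij (σ.injective h))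
    · intro I K' hIK
      rw [ds_colon_iff a f hf]
      intro p hp
      refine ⟨p, hp, ?_⟩
      have hpI : σ p ≠ σ I := fun h => (ne_of_lt hp) (σ.injective h)
      have hpK : σ p ≠ σ K' := fun h => (ne_of_lt (lt_of_lt_of_le hp hIK)) (σ.injective h)
      rw [Finsupp.le_def]
      intro x
      simp only [Finsupp.add_apply, Finsupp.tsub_apply, ha]
      rcases hdg' (σ p) x with h1 | h1 <;>
        rcases hgg' (σ p) (σ I) hpI x with h2 | h2 <;>
          rcases hgg' (σ p) (σ K') hpK x with h3 | h3 <;> omega
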